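/- Let S = (s_ij) ∈ ℝ^{s×s} with ‖S‖_∞ ≤ ρ ≤ 1/2, and fix a sign σ₁ ∈ {-1,1}. Define the reduced (s-1)×(s-1) matrix S̃ by s̃_ij = s_ij + s_{i1}s_{1j}/(σ₁ - s_{11}) for i,j = 2,...,s. Then ‖S̃‖_∞ ≤ ρ. -/
import Mathlib


/-- One step of signed Gaussian elimination preserves the row-sum bound:
if `‖S‖_∞ ≤ ρ ≤ 1/2` and `σ₁ ∈ {-1,1}`, the reduced matrix
`s̃_ij = s_ij + s_{i1} s_{1j}/(σ₁ - s_{11})` again satisfies `‖S̃‖_∞ ≤ ρ`. -/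
theorem signed_gaussian_elimination_step
    (n : ℕ) (S : Matrix (Fin (n + 1)) (Fin (n + 1)) ℝ)
    (ρ : ℝ) (hρ : ρ ≤ 1 / 2)
    (hS : ∀ i, ∑ j, |S i j| ≤ ρ)
    (σ₁ : ℝ) (hσ : σ₁ = 1 ∨ σ₁ = -1) :
    ∀ i : Fin n, ∑ j : Fin n,
      |S i.succ j.succ + S i.succ 0 * S 0 j.succ / (σ₁ - S 0 0)| ≤ ρ := by
  intro i
  have h0 : |S 0 0| + ∑ j : Fin n, |S 0 j.succ| ≤ ρ := by
    have := hS 0; rwa [Fin.sum_univ_succ] at this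
  have hi : |S i.succ 0| + ∑ j : Fin n, |S i.succ j.succ| ≤ ρ := by
    have := hS i.succ; rwa [Fin.sum_univ_succ] at this
  have ha : |S 0 0| ≤ ρ := by
    have : (0:ℝ) ≤ ∑ j : Fin n, |S 0 j.succ| :=
      Finset.sum_nonneg fun _ _ => abs_nonneg _
    linarith
  have hd : (1:ℝ)/2 ≤ |σ₁ - S 0 0| := by
    have h1 : |σ₁| = 1 := by rcases hσ with h | h <;> simp [h]
    have := abs_sub_abs_le_abs_sub σ₁ (S 0 0)
    linarith
  have hdpos : (0:ℝ) < |σ₁ - S 0 0| := by linarith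
  calc ∑ j : Fin n, |S i.succ j.succ + S i.succ 0 * S 0 j.succ / (σ₁ - S 0 0)|
      ≤ ∑ j : Fin n, (|S i.succ j.succ| + |S i.succ 0| * |S 0 j.succ| / |σ₁ - S 0 0|) := by
        refine Finset.sum_le_sum fun j _ => ?_
        calc |S i.succ j.succ + S i.succ 0 * S 0 j.succ / (σ₁ - S 0 0)|
            ≤ |S i.succ j.succ| + |S i.succ 0 * S 0 j.succ / (σ₁ - S 0 0)| := abs_add_le _ _
          _ = |S i.succ j.succ| + |S i.succ 0| * |S 0 j.succ| / |σ₁ - S 0 0| := by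
              rw [abs_div, abs_mul]
    _ = (∑ j : Fin n, |S i.succ j.succ|)
        + |S i.succ 0| / |σ₁ - S 0 0| * ∑ j : Fin n, |S 0 j.succ| := by
        rw [Finset.sum_add_distrib, Finset.mul_sum]
        congr 1
        exact Finset.sum_congr rfl fun j _ => by ring
    _ ≤ ρ := by
        have hsum0 : ∑ j : Fin n, |S 0 j.succ| ≤ |σ₁ - S 0 0| := by
          have := abs_nonneg (S 0 0); linarith
        have hmain : |S i.succ 0| / |σ₁ - S 0 0| * ∑ j : Fin n, |S 0 j.succ| ≤ |S i.succ 0| := by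
          rw [div_mul_eq_mul_div, div_le_iff₀ hdpos]
          have h2 := abs_nonneg (S i.succ 0)
          nlinarith
        linarith
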